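/- For any integers n and k with 2 ≤ k ≤ ⌊n/2⌋, the independence number of the circulant graph C(n,k) equals ⌊n/(k+1)⌋, i.e., β(C(n,k)) = ⌊n/(k+1)⌋. -/

import Mathlib

namespace OITRPaper

variable {V : Type*}

/-- `S` is a vertex cover of `G`: every edge of `G` is incident to a vertex of `S`. -/
def IsVertexCover (G : SimpleGraph V) (S : Set V) : Prop :=
  ∀ ⦃u v : V⦄, G.Adj u v → u ∈ S ∨ v ∈ S

/-- `S` is an independent set of `G`: no two vertices of `S` are adjacent. -/
def IsIndepSet (G : SimpleGraph V) (S : Set V) : Prop :=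
  ∀ ⦃u : V⦄, u ∈ S → ∀ ⦃v : V⦄, v ∈ S → ¬ G.Adj u v

/-- `S` is a dominating set of `G`. -/
def IsDomSet (G : SimpleGraph V) (S : Set V) : Prop :=
  ∀ v : V, v ∉ S → ∃ u ∈ S, G.Adj v u

/-- `S` is a total dominating set of `G`: every vertex has a neighbor in `S`. -/
def IsTotalDomSet (G : SimpleGraph V) (S : Set V) : Prop :=
  ∀ v : V, ∃ u ∈ S, G.Adj v u

/-- `G` is claw-free: it contains no induced `K_{1,3}`. -/
def ClawFree (G : SimpleGraph V) : Prop :=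
  ∀ c a b d : V, G.Adj c a → G.Adj c b → G.Adj c d →
    a ≠ b → a ≠ d → b ≠ d → G.Adj a b ∨ G.Adj a d ∨ G.Adj b d

/-- `f` is a Roman dominating function on `G`. -/
def IsRDF (G : SimpleGraph V) (f : V → ℕ) : Prop :=
  (∀ v, f v ≤ 2) ∧ ∀ v, f v = 0 → ∃ u, G.Adj v u ∧ f u = 2

/-- `f` is an outer-independent Roman dominating function on `G`. -/
def IsOIRDF (G : SimpleGraph V) (f : V → ℕ) : Prop :=
  IsRDF G f ∧ IsIndepSet G {v | f v = 0}

/-- `f` is an outer-independent total Roman dominating function on `G`. -/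
def IsOITRDF (G : SimpleGraph V) (f : V → ℕ) : Prop :=
  IsOIRDF G f ∧ ∀ v, 1 ≤ f v → ∃ u, G.Adj v u ∧ 1 ≤ f u

variable [Fintype V]

/-- The vertex cover number `α(G)`. -/
noncomputable def vertexCoverNum (G : SimpleGraph V) : ℕ :=
  sInf {m | ∃ S : Set V, IsVertexCover G S ∧ S.ncard = m}

/-- The independence number `β(G)`. -/
noncomputable def indepNum (G : SimpleGraph V) : ℕ :=
  sSup {m | ∃ S : Set V, IsIndepSet G S ∧ S.ncard = m}

/-- The domination number `γ(G)`. -/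
noncomputable def domNum (G : SimpleGraph V) : ℕ :=
  sInf {m | ∃ S : Set V, IsDomSet G S ∧ S.ncard = m}

/-- The total domination number `γ_t(G)`. -/
noncomputable def totalDomNum (G : SimpleGraph V) : ℕ :=
  sInf {m | ∃ S : Set V, IsTotalDomSet G S ∧ S.ncard = m}

/-- The outer-independent total domination number `γ_{t,oi}(G)`. -/
noncomputable def oiTotalDomNum (G : SimpleGraph V) : ℕ :=
  sInf {m | ∃ S : Set V, IsTotalDomSet G S ∧ IsIndepSet G Sᶜ ∧ S.ncard = m}

/-- The Roman domination number `γ_R(G)`. -/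
noncomputable def romanDomNum (G : SimpleGraph V) : ℕ :=
  sInf {w | ∃ f : V → ℕ, IsRDF G f ∧ ∑ v, f v = w}

/-- The outer-independent Roman domination number `γ_{oiR}(G)`. -/
noncomputable def oiRomanDomNum (G : SimpleGraph V) : ℕ :=
  sInf {w | ∃ f : V → ℕ, IsOIRDF G f ∧ ∑ v, f v = w}

/-- The outer-independent total Roman domination number `γ_{oitR}(G)`. -/
noncomputable def oitRomanDomNum (G : SimpleGraph V) : ℕ :=
  sInf {w | ∃ f : V → ℕ, IsOITRDF G f ∧ ∑ v, f v = w}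


/-- The circulant graph `C(n,k)` on vertex set `ℤ/nℤ` (modelled as `Fin n`):
distinct vertices `i, j` are adjacent iff `j ≡ i + t (mod n)` or `i ≡ j + t (mod n)`
for some `t ∈ {1, …, k}`. -/
def circulant (n k : ℕ) : SimpleGraph (Fin n) where
  Adj i j := i ≠ j ∧ ∃ t : ℕ, 1 ≤ t ∧ t ≤ k ∧
      ((i.val + t) % n = j.val ∨ (j.val + t) % n = i.val)
  symm := ⟨by
    rintro i j ⟨hij, t, h1, h2, h⟩
    exact ⟨hij.symm, t, h1, h2, h.symm⟩⟩
  loopless := ⟨fun i h => h.1 rfl⟩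

/-- The wheel graph `W_n` of order `n`: a universal hub vertex (`none`) joined to all
vertices of a cycle of order `n - 1`. -/
def wheel (n : ℕ) : SimpleGraph (Option (Fin (n - 1))) where
  Adj x y :=
    match x, y with
    | none, none => False
    | none, some _ => True
    | some _, none => True
    | some i, some j => i ≠ j ∧
        ((i.val + 1) % (n - 1) = j.val ∨ (j.val + 1) % (n - 1) = i.val)
  symm := ⟨by
    rintro (_ | i) (_ | j) h <;> simp_all
    exact ⟨Ne.symm h.1, h.2.symm⟩⟩
  loopless := ⟨by
    rintro (_ | i) h <;> simp_all⟩

/-- The direct (tensor) product of two simple graphs. -/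
def directProd {α β : Type*} (G : SimpleGraph α) (H : SimpleGraph β) :
    SimpleGraph (α × β) where
  Adj x y := G.Adj x.1 y.1 ∧ H.Adj x.2 y.2
  symm := ⟨fun _ _ ⟨h1, h2⟩ => ⟨h1.symm, h2.symm⟩⟩
  loopless := ⟨fun x h => G.loopless.irrefl x.1 h.1⟩


lemma aux_upper (n k : ℕ) (hk2 : 2 ≤ k) (h2k : 2*k ≤ n)
    (S : Set (Fin n)) (hS : IsIndepSet (circulant n k) S) :
    S.ncard ≤ n / (k+1) := by
  have hn : 0 < n := by omega
  classical
  have hfin : S.Finite := Set.toFinite S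
  set F := hfin.toFinset with hFdef
  have hmem : ∀ a, a ∈ F ↔ a ∈ S := fun a => hfin.mem_toFinset
  set I : Fin n → Finset (Fin n) := fun a =>
    (Finset.range (k+1)).image (fun s => (⟨(a.val + s) % n, Nat.mod_lt _ hn⟩ : Fin n)) with hI
  -- key: no two intervals share a point
  have key : ∀ a ∈ F, ∀ b ∈ F, a ≠ b → ∀ s t : ℕ, s ≤ k → t ≤ k → t ≤ s →
      (a.val + s) % n = (b.val + t) % n → False := by
    intro a ha b hb hab s t hs ht hts heq
    have h1 : a.val + (s - t) + t = a.val + s := by omega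
    have h2 : (a.val + (s - t)) ≡ b.val [MOD n] := by
      apply Nat.ModEq.add_right_cancel' t
      rw [h1]; exact heq
    have h3 : (a.val + (s - t)) % n = b.val := by
      rw [Nat.ModEq] at h2
      rw [h2, Nat.mod_eq_of_lt b.isLt]
    rcases Nat.eq_zero_or_pos (s - t) with h0 | h0
    · rw [h0, Nat.add_zero, Nat.mod_eq_of_lt a.isLt] at h3
      exact hab (Fin.ext h3)
    · have hadj : (circulant n k).Adj a b :=
        ⟨hab, s - t, h0, by omega, Or.inl h3⟩
      exact hS ((hmem a).mp ha) ((hmem b).mp hb) hadj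
  have hdisj : ∀ a ∈ F, ∀ b ∈ F, a ≠ b → Disjoint (I a) (I b) := by
    intro a ha b hb hab
    rw [Finset.disjoint_left]
    intro c hca hcb
    simp only [hI, Finset.mem_image, Finset.mem_range] at hca hcb
    obtain ⟨s, hs, hsc⟩ := hca
    obtain ⟨t, ht, htc⟩ := hcb
    have heq : (a.val + s) % n = (b.val + t) % n := by
      have := hsc.trans htc.symm
      exact congrArg Fin.val this
    rcases Nat.le_total t s with h | h
    · exact key a ha b hb hab s t (by omega) (by omega) h heq
    · exact key b hb a ha hab.symm t s (by omega) (by omega) h heq.symm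
  have hcard : ∀ a : Fin n, (I a).card = k + 1 := by
    intro a
    rw [hI]
    rw [Finset.card_image_of_injOn, Finset.card_range]
    intro s hs t ht h
    simp only [Finset.mem_coe, Finset.mem_range] at hs ht
    have h' : (a.val + s) % n = (a.val + t) % n := congrArg Fin.val h
    have h2 : s ≡ t [MOD n] := Nat.ModEq.add_left_cancel' a.val h'
    rw [Nat.ModEq, Nat.mod_eq_of_lt (by omega), Nat.mod_eq_of_lt (by omega)] at h2
    exact h2
  have hbig : F.card * (k+1) ≤ n := by
    calc F.card * (k+1) = ∑ a ∈ F, (I a).card := by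
          rw [Finset.sum_congr rfl (fun a _ => hcard a), Finset.sum_const, smul_eq_mul]
      _ = (F.biUnion I).card := (Finset.card_biUnion hdisj).symm
      _ ≤ Fintype.card (Fin n) := Finset.card_le_univ _
      _ = n := Fintype.card_fin n
  rw [Set.ncard_eq_toFinset_card S hfin]
  rw [Nat.le_div_iff_mul_le (by omega)]
  exact hbig

lemma aux_lower (n k : ℕ) (hk2 : 2 ≤ k) (h2k : 2*k ≤ n) :
    ∃ S : Set (Fin n), IsIndepSet (circulant n k) S ∧ S.ncard = n / (k+1) := by
  have hn : 0 < n := by omega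
  set m := n / (k+1) with hm
  have hmn : m * (k+1) ≤ n := Nat.div_mul_le_self n (k+1)
  have hlt : ∀ i, i < m → i * (k+1) + k < n := by
    intro i hi
    have h1 : (i+1) * (k+1) ≤ m * (k+1) := Nat.mul_le_mul_right _ (by omega)
    have h2 : (i+1) * (k+1) = i * (k+1) + (k+1) := by ring
    omega
  set F : Finset (Fin n) :=
    (Finset.range m).image (fun i => (⟨i * (k+1) % n, Nat.mod_lt _ hn⟩ : Fin n)) with hF
  have hmod : ∀ i, i < m → i * (k+1) % n = i * (k+1) := by
    intro i hi; exact Nat.mod_eq_of_lt (by have := hlt i hi; omega)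
  -- no adjacency claim
  have claim : ∀ i j t : ℕ, i < m → j < m → 1 ≤ t → t ≤ k →
      i * (k+1) + t ≠ j * (k+1) := by
    intro i j t hi hj ht1 htk heq
    have hij : i < j := by
      rcases Nat.lt_or_ge i j with h' | h'
      · exact h'
      · have := Nat.mul_le_mul_right (k+1) h'
        omega
    have h1 : (i+1) * (k+1) ≤ j * (k+1) := Nat.mul_le_mul_right _ (by omega)
    have h2 : (i+1) * (k+1) = i * (k+1) + (k+1) := by ring
    omega
  refine ⟨↑F, ?_, ?_⟩
  · intro u hu v hv hadj
    simp only [hF, Finset.coe_image, Set.mem_image, Finset.mem_coe, Finset.mem_range] at hu hv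
    obtain ⟨i, hi, hiu⟩ := hu
    obtain ⟨j, hj, hjv⟩ := hv
    obtain ⟨hne, t, ht1, htk, hor⟩ := hadj
    have hu' : u.val = i * (k+1) := by rw [← hiu]; exact hmod i hi
    have hv' : v.val = j * (k+1) := by rw [← hjv]; exact hmod j hj
    rcases hor with h | h
    · rw [hu', hv'] at h
      rw [Nat.mod_eq_of_lt (by have := hlt i hi; omega)] at h
      exact claim i j t hi hj ht1 htk h
    · rw [hu', hv'] at h
      rw [Nat.mod_eq_of_lt (by have := hlt j hj; omega)] at h
      exact claim j i t hj hi ht1 htk h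
  · rw [Set.ncard_coe_finset, hF]
    rw [Finset.card_image_of_injOn, Finset.card_range]
    intro i hi j hj h
    simp only [Finset.mem_coe, Finset.mem_range] at hi hj
    have h' : i * (k+1) % n = j * (k+1) % n := congrArg Fin.val h
    rw [hmod i hi, hmod j hj] at h'
    exact Nat.eq_of_mul_eq_mul_right (by omega) h'

/-- The independence number of the circulant graph `C(n,k)` is `⌊n/(k+1)⌋`,
for `2 ≤ k ≤ ⌊n/2⌋`. -/
theorem stmt11 (n k : ℕ) (hk2 : 2 ≤ k) (hkn : k ≤ n / 2) :
    indepNum (circulant n k) = n / (k + 1) := by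
  have h2k : 2 * k ≤ n := by
    have : k * 2 ≤ n := (Nat.le_div_iff_mul_le (by norm_num)).mp hkn
    omega
  obtain ⟨S0, hS0, hc0⟩ := aux_lower n k hk2 h2k
  have hub : ∀ m ∈ {m | ∃ S : Set (Fin n), IsIndepSet (circulant n k) S ∧ S.ncard = m},
      m ≤ n / (k+1) := by
    rintro m ⟨S, hS, rfl⟩
    exact aux_upper n k hk2 h2k S hS
  rw [indepNum]
  apply le_antisymm
  · exact csSup_le ⟨n/(k+1), S0, hS0, hc0⟩ hub
  · exact le_csSup ⟨n/(k+1), hub⟩ ⟨S0, hS0, hc0⟩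

end OITRPaper
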